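/- Let P be a left cancellative monoid and let ℐ be the smallest collection of partial bijections of P that contains, for every c ∈ P, the left multiplication map λ_c (with domain all of P, range cP, and λ_c(x) = c·x), and is closed under taking inverses of partial bijections and under composition of partial bijections. If s ∈ ℐ has domain equal to all of P and range equal to all of P, then u := s(1) is an invertible element (unit) of P and s(x) = u · x for every x ∈ P; that is, s is left multiplication by a unit of P. -/
import Mathlib


/-- The left inverse hull of a (left cancellative) monoid `P`: the smallest collection
of partial bijections of `P` which contains, for every `c ∈ P`, the left multiplication
map `λ_c` (with domain all of `P`, range `cP`, and `λ_c x = c * x`), and which is closed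
under taking inverses of partial bijections and under composition of partial bijections.
(The composite `e.trans f` of two `PartialEquiv`s has source
`{ x ∈ e.source : e x ∈ f.source }`, and `e.symm` swaps source and target.) -/
inductive LeftInverseHull (P : Type*) [Monoid P] : PartialEquiv P P → Prop
  | base (c : P) (e : PartialEquiv P P) (hsrc : e.source = Set.univ)
      (hfun : ∀ x : P, e x = c * x) : LeftInverseHull P e
  | symm (e : PartialEquiv P P) : LeftInverseHull P e → LeftInverseHull P e.symm
  | trans (e f : PartialEquiv P P) : LeftInverseHull P e → LeftInverseHull P f →
      LeftInverseHull P (e.trans f)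

private def RInv {P : Type*} [Monoid P] (e : PartialEquiv P P) : Prop :=
  (∀ x ∈ e.source, ∀ y : P, x * y ∈ e.source) ∧
  (∀ x ∈ e.target, ∀ y : P, x * y ∈ e.target) ∧
  (∀ x ∈ e.source, ∀ y : P, e (x * y) = e x * y) ∧
  (∀ x ∈ e.target, ∀ y : P, e.symm (x * y) = e.symm x * y)

private lemma rinv_of_hull {P : Type*} [Monoid P] (e : PartialEquiv P P)
    (h : LeftInverseHull P e) : RInv e := by
  induction h with
  | base c e hsrc hfun =>
    have htgt : e.target = e '' e.source := e.image_source_eq_target.symm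
    refine ⟨fun x _ y => by simp [hsrc], ?_, fun x _ y => by rw [hfun, hfun, mul_assoc], ?_⟩
    · intro x hx y
      rw [htgt] at hx ⊢
      obtain ⟨a, ha, rfl⟩ := hx
      exact ⟨a * y, by simp [hsrc], by rw [hfun, hfun, mul_assoc]⟩
    · intro x hx y
      obtain ⟨a, ha, rfl⟩ := htgt ▸ hx
      have h1 : e a * y = e (a * y) := by rw [hfun, hfun, mul_assoc]
      rw [h1, e.left_inv ha, e.left_inv (by simp [hsrc])]
  | symm e _ ih =>
    obtain ⟨h1, h2, h3, h4⟩ := ih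
    exact ⟨h2, h1, h4, fun x hx y => h3 x hx y⟩
  | trans e f _ _ ihe ihf =>
    obtain ⟨e1, e2, e3, e4⟩ := ihe
    obtain ⟨f1, f2, f3, f4⟩ := ihf
    refine ⟨?_, ?_, ?_, ?_⟩
    · intro x hx y
      rw [PartialEquiv.trans_source] at hx ⊢
      refine ⟨e1 x hx.1 y, ?_⟩
      simp only [Set.mem_preimage] at hx ⊢
      rw [e3 x hx.1 y]
      exact f1 _ hx.2 y
    · intro x hx y
      rw [PartialEquiv.trans_target] at hx ⊢
      refine ⟨f2 x hx.1 y, ?_⟩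
      simp only [Set.mem_preimage] at hx ⊢
      rw [f4 x hx.1 y]
      exact e2 _ hx.2 y
    · intro x hx y
      rw [PartialEquiv.trans_source] at hx
      show f (e (x * y)) = f (e x) * y
      rw [e3 x hx.1 y, f3 _ hx.2 y]
    · intro x hx y
      rw [PartialEquiv.trans_target] at hx
      show e.symm (f.symm (x * y)) = e.symm (f.symm x) * y
      rw [f4 x hx.1 y, e4 _ hx.2 y]

/-- **Globally defined zigzag maps are left multiplications by units.**  Let `P` be a
left cancellative monoid and let `ℐ` be its left inverse hull.  If `s ∈ ℐ` has domain
equal to all of `P` and range equal to all of `P`, then `u := s 1` is an invertible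
element (unit) of `P` and `s x = u * x` for every `x ∈ P`; that is, `s` is left
multiplication by a unit of `P`. -/
theorem leftInverseHull_total_isUnit (P : Type*) [Monoid P]
    (hP : ∀ c x y : P, c * x = c * y → x = y)
    (s : PartialEquiv P P) (hs : LeftInverseHull P s)
    (hsrc : s.source = Set.univ) (htgt : s.target = Set.univ) :
    IsUnit (s 1) ∧ ∀ x : P, s x = s 1 * x := by
  obtain ⟨-, -, h3, h4⟩ := rinv_of_hull s hs
  have hmem : ∀ x : P, x ∈ s.source := by simp [hsrc]
  have hmem' : ∀ x : P, x ∈ s.target := by simp [htgt]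
  have hfun : ∀ x : P, s x = s 1 * x := fun x => by
    simpa using h3 1 (hmem 1) x
  have hgun : ∀ x : P, s.symm x = s.symm 1 * x := fun x => by
    simpa using h4 1 (hmem' 1) x
  refine ⟨?_, hfun⟩
  have hl : s 1 * s.symm 1 = 1 := by
    have := s.right_inv (hmem' 1)
    rw [hgun 1, hfun] at this
    simpa [mul_assoc] using this
  have hr : s.symm 1 * s 1 = 1 := by
    have := s.left_inv (hmem 1)
    rw [hfun 1, hgun] at this
    simpa [mul_assoc] using this
  exact ⟨⟨s 1, s.symm 1, hl, hr⟩, rfl⟩
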